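/- Let k ≥ 2 be an even integer and a, b nonzero elements of a UFD R. In the Laurent polynomial ring over R generated by initial variables of the two-dimensional tau-function equation f_{t,n} f_{t−2,n−1}^k f_{t−1,n−2}^k = −f_{t−2,n−2} f_{t−1,n}^k f_{t,n−1}^k + a f_{t−1,n−1}^{k²−1} f_{t,n−2}^{k²} f_{t−1,n}^k f_{t−2,n−1}^k + b f_{t−1,n−1}^{k²−1} f_{t−2,n}^{k²} f_{t,n−1}^k f_{t−1,n−2}^k on a good domain, suppose the iterates f_{t−1,n−1}, f_{t−2,n}, f_{t,n−1}, f_{t−1,n−2} are Laurent polynomials pairwise coprime with the irreducible Laurent polynomial f_{t−1,n}, and f_{t,n} is a Laurent polynomial. Then f_{t−1,n} does not divide f_{t,n}. -/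
import Mathlib


/-- Step 3 of Theorem B.6: In the Laurent polynomial ring `A` (a UFD)
suppose the iterates satisfy the tau-function relation
`f_{t,n} f_{t−2,n−1}^k f_{t−1,n−2}^k = −f_{t−2,n−2} f_{t−1,n}^k f_{t,n−1}^k
+ a f_{t−1,n−1}^{k²−1} f_{t,n−2}^{k²} f_{t−1,n}^k f_{t−2,n−1}^k
+ b f_{t−1,n−1}^{k²−1} f_{t−2,n}^{k²} f_{t,n−1}^k f_{t−1,n−2}^k`,
with `p = f_{t−1,n}` irreducible, `f_{t−1,n−1}, f_{t−2,n}, f_{t,n−1}, f_{t−1,n−2}`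
each coprime to `p`, and `b` not divisible by `p`. Then `p` does not divide `f_{t,n}`.
Here `g₁ = f_{t−1,n−1}`, `g₂ = f_{t−2,n}`, `g₃ = f_{t,n−1}`, `g₄ = f_{t−1,n−2}`,
`c₁ = f_{t−2,n−2}`, `c₂ = f_{t−2,n−1}`, `c₃ = f_{t−1,n−2}` (= `g₄`), `c₄ = f_{t,n−2}`. -/
theorem stmt16 {A : Type*} [CommRing A] [IsDomain A] [UniqueFactorizationMonoid A]
    (k : ℕ) (hk : 2 ≤ k) (hkeven : Even k)
    (a b p g₁ g₂ g₃ g₄ c₁ c₂ c₄ ftn : A)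
    (hp : Irreducible p)
    (h₁ : IsRelPrime g₁ p) (h₂ : IsRelPrime g₂ p)
    (h₃ : IsRelPrime g₃ p) (h₄ : IsRelPrime g₄ p)
    (hb : ¬ p ∣ b)
    (hrel : ftn * c₂ ^ k * g₄ ^ k =
      -c₁ * p ^ k * g₃ ^ k +
        a * g₁ ^ (k ^ 2 - 1) * c₄ ^ (k ^ 2) * p ^ k * c₂ ^ k +
        b * g₁ ^ (k ^ 2 - 1) * g₂ ^ (k ^ 2) * g₃ ^ k * g₄ ^ k) :
    ¬ p ∣ ftn := by
  intro hdvd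
  have hprime : Prime p := hp.prime
  have hpk : p ∣ p ^ k := dvd_pow_self p (by omega)
  have hdvd3 : p ∣ b * g₁ ^ (k ^ 2 - 1) * g₂ ^ (k ^ 2) * g₃ ^ k * g₄ ^ k := by
    have h : b * g₁ ^ (k ^ 2 - 1) * g₂ ^ (k ^ 2) * g₃ ^ k * g₄ ^ k =
        ftn * c₂ ^ k * g₄ ^ k - (-c₁ * p ^ k * g₃ ^ k)
          - a * g₁ ^ (k ^ 2 - 1) * c₄ ^ (k ^ 2) * p ^ k * c₂ ^ k := by
      rw [hrel]; ring
    rw [h]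
    exact dvd_sub (dvd_sub (hdvd.mul_right _ |>.mul_right _)
      (hpk.mul_left _ |>.mul_right _)) (by exact (hpk.mul_left _).mul_right _)
  have hnot : ∀ g : A, IsRelPrime g p → ¬ p ∣ g := fun g hg hd =>
    hp.not_isUnit (hg hd dvd_rfl)
  rcases (hprime.dvd_mul.1 hdvd3) with h | h
  · rcases (hprime.dvd_mul.1 h) with h | h
    · rcases (hprime.dvd_mul.1 h) with h | h
      · rcases (hprime.dvd_mul.1 h) with h | h
        · exact hb h
        · exact hnot g₁ h₁ (hprime.dvd_of_dvd_pow h)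
      · exact hnot g₂ h₂ (hprime.dvd_of_dvd_pow h)
    · exact hnot g₃ h₃ (hprime.dvd_of_dvd_pow h)
  · exact hnot g₄ h₄ (hprime.dvd_of_dvd_pow h)
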